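/- An element a of a complex unital Banach algebra A has a generalized Drazin inverse if and only if there exists x ∈ A with ax = xa and a − a²x quasinilpotent. -/

import Mathlib

open Filter Finset

/-- An element of a complex (Banach) algebra is quasinilpotent if its spectral radius is zero. -/
noncomputable def Quasinilpotent {A : Type*} [Ring A] [Algebra ℂ A] (q : A) : Prop :=
  spectralRadius ℂ q = 0

/-- `a` has a generalized Drazin inverse: some `b` with `ab = ba`, `b = bab`,
and `a - a²b` quasinilpotent. -/
noncomputable def HasGDrazin {A : Type*} [Ring A] [Algebra ℂ A] (a : A) : Prop :=
  ∃ b : A, a * b = b * a ∧ b = b * a * b ∧ Quasinilpotent (a - a ^ 2 * b)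

open Topology



/-- Norm-root characterization predicate. -/
def QTend {B : Type*} [NormedRing B] (y : B) : Prop :=
  Tendsto (fun n : ℕ => ‖y ^ n‖ ^ (1 / (n : ℝ))) atTop (𝓝 0)

lemma quasi_iff {A : Type*} [NormedRing A] [NormedAlgebra ℂ A] [CompleteSpace A] (y : A) :
    Quasinilpotent y ↔ QTend y := by
  have H := spectrum.pow_norm_pow_one_div_tendsto_nhds_spectralRadius y
  constructor
  · intro h
    rw [Quasinilpotent] at h
    rw [h] at H
    have H2 := (ENNReal.tendsto_toReal (by simp)).comp H
    simp only [Function.comp_def] at H2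
    have he : (fun n : ℕ => ‖y ^ n‖ ^ (1 / (n : ℝ)))
        = fun n : ℕ => (ENNReal.ofReal (‖y ^ n‖ ^ (1 / (n : ℝ)))).toReal :=
      funext fun n => (ENNReal.toReal_ofReal (Real.rpow_nonneg (norm_nonneg _) _)).symm
    rw [QTend, he]
    simpa using H2
  · intro h
    have h' : Tendsto (fun n : ℕ => ‖y ^ n‖ ^ (1 / (n : ℝ))) atTop (𝓝 0) := h
    have h2 : Tendsto (fun n : ℕ => ENNReal.ofReal (‖y ^ n‖ ^ (1 / (n : ℝ)))) atTop
        (𝓝 (ENNReal.ofReal 0)) := (ENNReal.continuous_ofReal.tendsto 0).comp h'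
    simp only [ENNReal.ofReal_zero] at h2
    exact tendsto_nhds_unique H h2

lemma QTend.pow_le {B : Type*} [NormedRing B] {v : B} (h : QTend v) {ε : ℝ} (hε : 0 < ε) :
    ∀ᶠ n in atTop, ‖v ^ n‖ ≤ ε ^ n := by
  have h' : Tendsto (fun n : ℕ => ‖v ^ n‖ ^ (1 / (n : ℝ))) atTop (𝓝 0) := h
  filter_upwards [h'.eventually (gt_mem_nhds hε), eventually_ge_atTop 1] with n h1 h2
  have hx : (0:ℝ) ≤ ‖v ^ n‖ := norm_nonneg _
  have hn : (n : ℝ) ≠ 0 := by positivity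
  have : ‖v ^ n‖ = (‖v ^ n‖ ^ (1 / (n : ℝ))) ^ n := by
    rw [← Real.rpow_natCast (‖v ^ n‖ ^ (1 / (n : ℝ))) n, ← Real.rpow_mul hx, one_div,
      inv_mul_cancel₀ hn, Real.rpow_one]
  rw [this]
  exact pow_le_pow_left₀ (Real.rpow_nonneg hx _) h1.le n

lemma QTend.mul {B : Type*} [NormedRing B] {v k : B} (hc : Commute v k) (hv : QTend v) :
    QTend (v * k) := by
  have hv' : Tendsto (fun n : ℕ => ‖v ^ n‖ ^ (1 / (n : ℝ))) atTop (𝓝 0) := hv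
  rw [QTend]
  have hg : Tendsto (fun n : ℕ => ‖v ^ n‖ ^ (1 / (n : ℝ)) * ‖k‖) atTop (𝓝 0) := by
    simpa using hv'.mul_const ‖k‖
  refine squeeze_zero' (Eventually.of_forall fun n => Real.rpow_nonneg (norm_nonneg _) _)
    ?_ hg
  filter_upwards [eventually_ge_atTop 1] with n hn
  have hn0 : n ≠ 0 := by omega
  have h1 : ‖(v * k) ^ n‖ ≤ ‖v ^ n‖ * ‖k‖ ^ n := by
    rw [hc.mul_pow]
    exact (norm_mul_le _ _).trans (by gcongr; exact norm_pow_le' k (Nat.pos_of_ne_zero hn0))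
  calc ‖(v * k) ^ n‖ ^ (1 / (n : ℝ)) ≤ (‖v ^ n‖ * ‖k‖ ^ n) ^ (1 / (n : ℝ)) :=
        Real.rpow_le_rpow (norm_nonneg _) h1 (by positivity)
      _ = ‖v ^ n‖ ^ (1 / (n : ℝ)) * ‖k‖ := by
        rw [Real.mul_rpow (norm_nonneg _) (by positivity), one_div,
          Real.pow_rpow_inv_natCast (norm_nonneg k) hn0]


private noncomputable def cbC (k : ℕ) : ℂ := (Nat.centralBinom k : ℂ)

private noncomputable def TT (n : ℕ) : ℂ := ∑ k ∈ range (n+1), cbC k * cbC (n-k)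

private noncomputable def WW (n : ℕ) : ℂ := ∑ k ∈ range (n+1), (k : ℂ) * (cbC k * cbC (n-k))

private lemma hA (n : ℕ) : 2 * WW n = (n : ℂ) * TT n := by
  have h1 : WW n = ∑ j ∈ range (n+1), ((n - j : ℕ) : ℂ) * (cbC (n-j) * cbC j) := by
    rw [WW, ← Finset.sum_range_reflect]
    refine Finset.sum_congr rfl fun j hj => ?_
    have hj' : j ≤ n := Nat.lt_succ_iff.mp (mem_range.mp hj)
    have e1 : n + 1 - 1 - j = n - j := by omega
    have e2 : n - (n - j) = j := by omega
    rw [e1, e2]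
  have : 2 * WW n = WW n + WW n := by ring
  rw [this]
  nth_rewrite 2 [h1]
  rw [WW, ← Finset.sum_add_distrib, TT, Finset.mul_sum]
  refine Finset.sum_congr rfl fun j hj => ?_
  have hj' : j ≤ n := Nat.lt_succ_iff.mp (mem_range.mp hj)
  have e3 : ((n - j : ℕ) : ℂ) = (n : ℂ) - (j : ℂ) := by
    push_cast [Nat.cast_sub hj']; ring
  rw [e3]
  ring

private lemma hB (n : ℕ) : WW (n+1) = 4 * WW n + 2 * TT n := by
  have h0 : WW (n+1) = ∑ i ∈ range (n+1),
      ((i+1 : ℕ) : ℂ) * (cbC (i+1) * cbC (n-i)) := by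
    rw [WW, Finset.sum_range_succ']
    simp only [Nat.cast_zero, zero_mul, add_zero]
    refine Finset.sum_congr rfl fun i _ => ?_
    have : n + 1 - (i + 1) = n - i := by omega
    rw [this]
  have hrec : ∀ i : ℕ, ((i+1 : ℕ) : ℂ) * cbC (i+1) = (2 * (2*i+1) : ℂ) * cbC i := by
    intro i
    have := Nat.succ_mul_centralBinom_succ i
    have h2 := congrArg (fun m : ℕ => (m : ℂ)) this
    push_cast at h2
    rw [cbC, cbC]
    push_cast
    linear_combination h2
  rw [h0, WW, TT, Finset.mul_sum, Finset.mul_sum, ← Finset.sum_add_distrib]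
  refine Finset.sum_congr rfl fun i _ => ?_
  have := hrec i
  calc ((i+1 : ℕ) : ℂ) * (cbC (i+1) * cbC (n-i))
      = (((i+1 : ℕ) : ℂ) * cbC (i+1)) * cbC (n-i) := by ring
    _ = ((2 * (2*i+1) : ℂ) * cbC i) * cbC (n-i) := by rw [this]
    _ = 4 * ((i:ℂ) * (cbC i * cbC (n-i))) + 2 * (cbC i * cbC (n-i)) := by push_cast; ring

private lemma TT_succ (n : ℕ) : TT (n+1) = 4 * TT n := by
  have h1 := hA (n+1)
  have h2 := hB n
  have h3 := hA n
  have hne : ((n:ℂ) + 1) ≠ 0 := Nat.cast_add_one_ne_zero n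
  apply mul_left_cancel₀ hne
  push_cast at h1
  calc ((n:ℂ)+1) * TT (n+1) = 2 * WW (n+1) := h1.symm
    _ = 2 * (4 * WW n + 2 * TT n) := by rw [h2]
    _ = 4 * (2 * WW n) + 4 * TT n := by ring
    _ = 4 * ((n:ℂ) * TT n) + 4 * TT n := by rw [h3]
    _ = ((n:ℂ)+1) * (4 * TT n) := by ring

lemma centralBinom_conv (n : ℕ) :
    ∑ k ∈ range (n+1), (Nat.centralBinom k : ℂ) * (Nat.centralBinom (n-k) : ℂ) = 4 ^ n := by
  have : TT n = 4 ^ n := by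
    induction n with
    | zero => simp [TT, cbC, Nat.centralBinom]
    | succ n ih => rw [TT_succ, ih]; ring
  simpa [TT, cbC] using this






lemma centralBinom_le_four_pow (n : ℕ) : Nat.centralBinom n ≤ 4 ^ n := by
  calc Nat.centralBinom n ≤ ∑ m ∈ range (2*n + 1), (2*n).choose m :=
        Finset.single_le_sum (f := fun m => (2*n).choose m) (fun _ _ => Nat.zero_le _)
          (mem_range.mpr (by omega))
    _ = 2 ^ (2*n) := Nat.sum_range_choose (2*n)
    _ = 4 ^ n := by rw [pow_mul]; norm_num

lemma qtend_summable {B : Type*} [NormedRing B] [NormedSpace ℂ B] {v : B} (hv : QTend v)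
    (f : ℕ → ℂ) (C : ℝ) (hf : ∀ n, ‖f n‖ ≤ C * 4 ^ n) :
    Summable (fun n => ‖f n • v ^ n‖) := by
  have h8 := hv.pow_le (ε := (8:ℝ)⁻¹) (by norm_num)
  have hC : 0 ≤ C := by have := (norm_nonneg (f 0)).trans (hf 0); simpa using this
  refine Summable.of_norm_bounded_eventually (g := fun n => C * (2:ℝ)⁻¹ ^ n)
    (((summable_geometric_of_lt_one (by norm_num) (by norm_num)).mul_left C)) ?_
  rw [Nat.cofinite_eq_atTop]
  filter_upwards [h8] with n hn
  rw [Real.norm_of_nonneg (norm_nonneg _), norm_smul]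
  calc ‖f n‖ * ‖v ^ n‖ ≤ (C * 4 ^ n) * ((8:ℝ)⁻¹ ^ n) :=
        mul_le_mul (hf n) hn (norm_nonneg _) (mul_nonneg hC (by positivity))
    _ = C * (2:ℝ)⁻¹ ^ n := by rw [mul_assoc, ← mul_pow]; norm_num

lemma construction {B : Type*} [NormedCommRing B] [NormedAlgebra ℂ B] [CompleteSpace B]
    (a x : B) (hq : QTend (a - a ^ 2 * x)) :
    ∃ b : B, b = b * a * b ∧ QTend (a - a ^ 2 * b) := by
  obtain ⟨q, Eq_q⟩ : ∃ q, q = a - a ^ 2 * x := ⟨_, rfl⟩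
  obtain ⟨v, Eq_v⟩ : ∃ v, v = q * x := ⟨_, rfl⟩
  obtain ⟨e, Eq_e⟩ : ∃ e, e = a * x := ⟨_, rfl⟩
  have hq' : QTend q := by rw [Eq_q]; exact hq
  have hv : QTend v := by rw [Eq_v]; exact hq'.mul (Commute.all q x)
  -- summability of the three series
  have hb1 : ∀ n : ℕ, ‖(Nat.centralBinom n : ℂ)‖ ≤ 1 * (4:ℝ) ^ n := by
    intro n
    rw [one_mul, Complex.norm_natCast]
    exact_mod_cast (by exact_mod_cast centralBinom_le_four_pow n : ((Nat.centralBinom n : ℝ)) ≤ (4:ℝ)^n)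
  have hb2 : ∀ n : ℕ, ‖(Nat.centralBinom (n+1) : ℂ)‖ ≤ 4 * (4:ℝ) ^ n := by
    intro n
    rw [Complex.norm_natCast]
    have : ((Nat.centralBinom (n+1) : ℝ)) ≤ (4:ℝ) ^ (n+1) := by
      exact_mod_cast centralBinom_le_four_pow (n+1)
    calc ((Nat.centralBinom (n+1) : ℝ)) ≤ (4:ℝ)^(n+1) := this
      _ = 4 * 4 ^ n := by ring
  have hb4 : ∀ n : ℕ, ‖((4:ℂ) ^ n)‖ ≤ 1 * (4:ℝ) ^ n := by
    intro n
    rw [one_mul, norm_pow]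
    norm_num
  have hsum1 := qtend_summable hv _ 1 hb1
  have hsum2 := qtend_summable hv _ 4 hb2
  have hsum4 := qtend_summable hv _ 1 hb4
  obtain ⟨t, Eq_t⟩ : ∃ t, t = ∑' n : ℕ, (Nat.centralBinom n : ℂ) • v ^ n := ⟨_, rfl⟩
  obtain ⟨m, Eq_m⟩ : ∃ m, m = ∑' n : ℕ, (Nat.centralBinom (n+1) : ℂ) • v ^ n := ⟨_, rfl⟩
  obtain ⟨g4, Eq_g4⟩ : ∃ g4, g4 = ∑' n : ℕ, ((4:ℂ) ^ n) • v ^ n := ⟨_, rfl⟩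
  have h4B : ∀ y : B, (4:B) * y = (4:ℂ) • y := fun y => by
    rw [Algebra.smul_def, map_ofNat]
  -- Cauchy product : t * t = g4
  have hcauchy : t * t = g4 := by
    rw [Eq_t, Eq_g4, tsum_mul_tsum_eq_tsum_sum_range_of_summable_norm hsum1 hsum1]
    refine tsum_congr fun n => ?_
    have hterm : ∀ k ∈ range (n+1),
        ((Nat.centralBinom k : ℂ) • v ^ k) * ((Nat.centralBinom (n-k) : ℂ) • v ^ (n-k))
        = ((Nat.centralBinom k : ℂ) * (Nat.centralBinom (n-k) : ℂ)) • v ^ n := by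
      intro k hk
      rw [smul_mul_smul_comm, ← pow_add, Nat.add_sub_cancel' (Nat.lt_succ_iff.mp (mem_range.mp hk))]
    rw [Finset.sum_congr rfl hterm, ← Finset.sum_smul, centralBinom_conv]
  -- g4 * (1 - 4v) = 1
  have hg : g4 * (1 - 4 * v) = 1 := by
    have h1 : g4 * (4 * v) = ∑' n : ℕ, ((4:ℂ) ^ (n+1)) • v ^ (n+1) := by
      rw [Eq_g4, ← Summable.tsum_mul_right _ hsum4.of_norm]
      refine tsum_congr fun n => ?_
      rw [smul_mul_assoc, show v ^ n * (4 * v) = (4:B) * v ^ (n+1) by ring, h4B,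
        smul_smul, ← pow_succ]
    have h2 : g4 = 1 + ∑' n : ℕ, ((4:ℂ) ^ (n+1)) • v ^ (n+1) := by
      rw [Eq_g4, Summable.tsum_eq_zero_add hsum4.of_norm]
      norm_num
    linear_combination h2 - h1
  -- the involution j and idempotent p
  obtain ⟨j, Eq_j⟩ : ∃ j, j = (2 * e - 1) * t := ⟨_, rfl⟩
  have h2e : (2 * e - 1) ^ 2 = 1 - 4 * v := by
    rw [Eq_e, Eq_v, Eq_q]; ring
  have hj : j ^ 2 = 1 := by
    rw [Eq_j]
    linear_combination (t * t) * h2e + (1 - 4 * v) * hcauchy + hg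
  obtain ⟨z, Eq_z⟩ : ∃ z, z = algebraMap ℂ B (1/2) := ⟨_, rfl⟩
  have hz : z * 2 = 1 := by
    rw [Eq_z, show (2:B) = algebraMap ℂ B 2 from (map_ofNat _ 2).symm, ← map_mul]
    norm_num
  obtain ⟨p, Eq_p⟩ : ∃ p, p = z * (1 + j) := ⟨_, rfl⟩
  have hp : p * p = p := by
    rw [Eq_p]
    linear_combination (z^2) * hj + (z + z * j) * hz
  -- t = 1 + m * v
  have ht1 : t = 1 + m * v := by
    rw [Eq_t, Eq_m, Summable.tsum_eq_zero_add hsum1.of_norm]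
    congr 1
    · simp [Nat.centralBinom_zero]
    · rw [← Summable.tsum_mul_right _ hsum2.of_norm]
      refine tsum_congr fun n => ?_
      rw [smul_mul_assoc, ← pow_succ]
  obtain ⟨k, Eq_k⟩ : ∃ k, k = z * (2 * e - 1) * m := ⟨_, rfl⟩
  obtain ⟨w, Eq_w⟩ : ∃ w, w = p - e := ⟨_, rfl⟩
  have hw : w = k * v := by
    rw [Eq_w, Eq_p, Eq_j, Eq_k]
    linear_combination (z * (2 * e - 1)) * ht1 + e * hz
  have hwq : QTend w := by
    rw [hw, mul_comm]
    exact hv.mul (Commute.all v k)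
  obtain ⟨N, hN1, hN2⟩ : ∃ N, ‖w ^ N‖ ≤ (2:ℝ)⁻¹ ^ N ∧ 1 ≤ N :=
    ((hwq.pow_le (by norm_num : (0:ℝ) < (2:ℝ)⁻¹)).and (eventually_ge_atTop 1)).exists
  have hunit : IsUnit (1 - w) := by
    have hlt : ‖w ^ N‖ < 1 :=
      lt_of_le_of_lt hN1 (pow_lt_one₀ (by norm_num) (by norm_num) (by omega))
    have hu : IsUnit (1 - w ^ N) := isUnit_one_sub_of_norm_lt_one hlt
    have hfact : 1 - w ^ N = (1 - w) * ∑ i ∈ range N, w ^ i := by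
      linear_combination geom_sum_mul w N
    rw [hfact] at hu
    exact isUnit_of_mul_isUnit_left hu
  obtain ⟨s, hs⟩ := hunit.exists_right_inv
  have hpe : p * e * s = p := by
    have h1 : p * e = p * (1 - w) := by
      rw [Eq_w]; linear_combination hp
    rw [h1, mul_assoc, hs, mul_one]
  refine ⟨x * p * s, ?_, ?_⟩
  · linear_combination (-(x * a * x * s * s)) * hp + (-(x * s)) * hpe + (x * p * s * s) * Eq_e
  · have hab : a - a ^ 2 * (x * p * s) = q * (1 - a * x * k) := by
      linear_combination (-a) * hpe + (a * p * s - a) * Eq_e + a * Eq_w - a * hw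
        - (a * k) * Eq_v - Eq_q
    rw [hab]
    exact hq'.mul (Commute.all _ _)







lemma isClosed_centralizer {M : Type*} [NormedRing M] (s : Set M) :
    IsClosed (Set.centralizer s) := by
  have h : Set.centralizer s = ⋂ c ∈ s, {z : M | c * z = z * c} := by
    ext z
    simp [Set.mem_centralizer_iff, Set.mem_iInter]
  rw [h]
  exact isClosed_biInter fun c _ =>
    isClosed_eq (continuous_const.mul continuous_id) (continuous_id.mul continuous_const)

theorem stmt0 {A : Type*} [NormedRing A] [NormedAlgebra ℂ A] [CompleteSpace A] (a : A) :
    HasGDrazin a ↔ ∃ x : A, a * x = x * a ∧ Quasinilpotent (a - a ^ 2 * x) := by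
  constructor
  · rintro ⟨b, h1, _, h3⟩
    exact ⟨b, h1, h3⟩
  · rintro ⟨x, hc, hqn⟩
    set C := Set.centralizer ({a, x} : Set A) with hC
    have haC : a ∈ C := by
      intro m hm
      rcases hm with rfl | rfl
      · rfl
      · exact hc.symm
    have hxC : x ∈ C := by
      intro m hm
      rcases hm with rfl | rfl
      · exact hc
      · rfl
    set T : Subalgebra ℂ A := Subalgebra.centralizer ℂ C with hT
    have hTsub : ∀ y : A, y ∈ T → y ∈ C := by
      intro y hy m hm
      have hmC : m ∈ C := by
        rcases hm with rfl | rfl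
        · exact haC
        · exact hxC
      exact ((Subalgebra.mem_centralizer_iff ℂ).mp hy m hmC)
    have hcomm : ∀ u v : ↥T, u * v = v * u := by
      intro u v
      exact Subtype.ext
        (((Subalgebra.mem_centralizer_iff ℂ).mp u.2 ↑v (hTsub ↑v v.2)).symm)
    have hclosed : IsClosed (T : Set A) := by
      rw [hT, Subalgebra.coe_centralizer]
      exact isClosed_centralizer C
    letI : CompleteSpace ↥T := hclosed.completeSpace_coe
    letI : NormedCommRing ↥T := { Subalgebra.normedRing T with mul_comm := hcomm }
    have haT : a ∈ T := by
      refine (Subalgebra.mem_centralizer_iff ℂ).mpr fun g hg => ?_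
      exact (hg a (by simp)).symm
    have hxT : x ∈ T := by
      refine (Subalgebra.mem_centralizer_iff ℂ).mpr fun g hg => ?_
      exact (hg x (by simp)).symm
    have key : ∀ y : ↥T, QTend y ↔ QTend (y : A) := by
      intro y
      have hnorm : (fun n : ℕ => ‖y ^ n‖ ^ (1 / (n : ℝ)))
          = fun n : ℕ => ‖(y : A) ^ n‖ ^ (1 / (n : ℝ)) := by
        funext n
        rw [← SubmonoidClass.coe_pow]
        rfl
      rw [QTend, QTend, hnorm]
    have hcoe : ((⟨a, haT⟩ - ⟨a, haT⟩ ^ 2 * ⟨x, hxT⟩ : ↥T) : A) = a - a ^ 2 * x := by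
      push_cast
      ring
    have hqT : QTend (⟨a, haT⟩ - ⟨a, haT⟩ ^ 2 * ⟨x, hxT⟩ : ↥T) := by
      rw [key, hcoe]
      exact (quasi_iff _).mp hqn
    obtain ⟨bT, hb1, hb2⟩ := construction (⟨a, haT⟩ : ↥T) ⟨x, hxT⟩ hqT
    refine ⟨(bT : A), ?_, ?_, ?_⟩
    · have := congrArg (Subtype.val) (hcomm ⟨a, haT⟩ bT)
      exact this
    · exact congrArg (Subtype.val) hb1
    · rw [quasi_iff]
      have h2 := (key _).mp hb2
      have hcoe2 : ((⟨a, haT⟩ - ⟨a, haT⟩ ^ 2 * bT : ↥T) : A) = a - a ^ 2 * (bT : A) := by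
        push_cast
        ring
      rwa [hcoe2] at h2
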